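/- arXiv:1809.04200 — 7 statements merged into one kernel-verified Lean document; each statement's English description precedes it below -/
import Mathlib

section
/- Let V be a real inner product space of finite dimension n ≥ 2, let φ be a symmetric bilinear form on V, and let λ₁, …, λₙ be the eigenvalues of φ repeated according to multiplicity. Let m and M be, respectively, the minimum and maximum of the set {λᵢλⱼ : i ≠ j}. Then the set of sectional curvature values of R_φ, namely {κ_{R_φ}(x,y) : x, y ∈ V linearly independent}, is exactly the closed interval [m, M]. -/
/-- Lagrange-type identity. -/
lemma lagrange_like {n : ℕ} (μ f g : Fin n → ℝ) :
    (∑ i, μ i * (f i * f i)) * (∑ j, μ j * (g j * g j)) - (∑ i, μ i * (f i * g i)) ^ 2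
      = (1/2) * ∑ i, ∑ j, μ i * μ j * (f i * g j - f j * g i) ^ 2 := by
  have h : ∑ i, ∑ j, μ i * μ j * (f i * g j - f j * g i) ^ 2
      = ∑ i, ∑ j, ((μ i * (f i * f i)) * (μ j * (g j * g j))
          + (μ i * (g i * g i)) * (μ j * (f j * f j))
          - 2 * ((μ i * (f i * g i)) * (μ j * (f j * g j)))) := by
    refine Finset.sum_congr rfl fun i _ => Finset.sum_congr rfl fun j _ => by ring
  rw [h]
  simp_rw [Finset.sum_sub_distrib, Finset.sum_add_distrib, ← Finset.mul_sum, ← Finset.sum_mul]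
  ring

/-- The canonical algebraic curvature tensor associated to a bilinear form `φ`:
`R_φ(x,y,z,w) = φ(x,w)φ(y,z) − φ(x,z)φ(y,w)`. -/
def canonCT {V : Type*} (φ : V → V → ℝ) (x y z w : V) : ℝ :=
  φ x w * φ y z - φ x z * φ y w

/-- The sectional curvature of the 2-plane spanned by `x` and `y` with respect to a
curvature tensor `R`: `κ_R(x,y) = R(x,y,y,x)/(⟨x,x⟩⟨y,y⟩ − ⟨x,y⟩²)`. -/
noncomputable def sectCurv {V : Type*} [NormedAddCommGroup V] [InnerProductSpace ℝ V]
    (R : V → V → V → V → ℝ) (x y : V) : ℝ :=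
  R x y y x / ((inner ℝ x x : ℝ) * (inner ℝ y y : ℝ) - (inner ℝ x y : ℝ) ^ 2)

/-- orthonormal pairs are linearly independent -/
lemma li_of_on {V : Type*} [NormedAddCommGroup V] [InnerProductSpace ℝ V]
    (u v : V) (huu : (inner ℝ u u : ℝ) = 1) (hvv : (inner ℝ v v : ℝ) = 1)
    (huv : (inner ℝ u v : ℝ) = 0) : LinearIndependent ℝ ![u, v] := by
  rw [LinearIndependent.pair_iff]
  intro s t hst
  have h1 : (inner ℝ (s • u + t • v) u : ℝ) = s := by
    rw [inner_add_left, real_inner_smul_left, real_inner_smul_left, huu,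
      real_inner_comm u v, huv]
    ring
  have h2 : (inner ℝ (s • u + t • v) v : ℝ) = t := by
    rw [inner_add_left, real_inner_smul_left, real_inner_smul_left, hvv, huv]
    ring
  rw [hst, inner_zero_left] at h1 h2
  exact ⟨h1.symm, h2.symm⟩

/-- The set of sectional curvatures of `R_φ` is exactly `[m, M]` where `m, M` are the
minimum and maximum pairwise products of eigenvalues of `φ`. -/
theorem sectional_curvature_range_of_canonCT
    {V : Type*} [NormedAddCommGroup V] [InnerProductSpace ℝ V] [FiniteDimensional ℝ V]
    {n : ℕ} (hn : 2 ≤ n) (hdim : Module.finrank ℝ V = n)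
    (φ : V →ₗ[ℝ] V →ₗ[ℝ] ℝ) (hφsymm : ∀ x y : V, φ x y = φ y x)
    (A : V →ₗ[ℝ] V) (hA : ∀ x y : V, φ x y = (inner ℝ (A x) y : ℝ))
    (b : OrthonormalBasis (Fin n) ℝ V) (lam : Fin n → ℝ)
    (hb : ∀ i, A (b i) = lam i • b i)
    (m M : ℝ)
    (hm : IsLeast {c : ℝ | ∃ i j : Fin n, i ≠ j ∧ c = lam i * lam j} m)
    (hM : IsGreatest {c : ℝ | ∃ i j : Fin n, i ≠ j ∧ c = lam i * lam j} M) :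
    {c : ℝ | ∃ x y : V, LinearIndependent ℝ ![x, y] ∧
      c = sectCurv (canonCT (fun u v => φ u v)) x y} = Set.Icc m M := by
  classical
  -- basic orthonormality facts
  have hbij : ∀ i j : Fin n, (inner ℝ (b i) (b j) : ℝ) = if i = j then 1 else 0 :=
    orthonormal_iff_ite.mp b.orthonormal
  have hφb : ∀ i j : Fin n, φ (b i) (b j) = lam i * (inner ℝ (b i) (b j) : ℝ) := by
    intro i j; rw [hA, hb, real_inner_smul_left]
  -- coordinate formulas
  have hAx : ∀ x : V, A x = ∑ i, (lam i * b.repr x i) • b i := by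
    intro x
    conv_lhs => rw [← b.sum_repr x]
    rw [map_sum]
    simp_rw [map_smul, hb, smul_smul, mul_comm]
  have hinner : ∀ x y : V, (inner ℝ x y : ℝ) = ∑ i, b.repr x i * b.repr y i := by
    intro x y
    conv_lhs => rw [← b.sum_repr x]
    rw [sum_inner]
    simp_rw [real_inner_smul_left, ← OrthonormalBasis.repr_apply_apply]
  have hphi : ∀ x y : V, φ x y = ∑ i, lam i * (b.repr x i * b.repr y i) := by
    intro x y
    rw [hA x y, hAx, sum_inner]
    refine Finset.sum_congr rfl fun i _ => ?_
    rw [real_inner_smul_left, ← OrthonormalBasis.repr_apply_apply]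
    ring
  ext c
  simp only [Set.mem_setOf_eq, Set.mem_Icc]
  constructor
  · -- forward inclusion
    rintro ⟨x, y, hli, rfl⟩
    set f : Fin n → ℝ := fun i => b.repr x i with hf
    set g : Fin n → ℝ := fun i => b.repr y i with hg
    -- numerator identity
    have hnum : canonCT (fun u v => φ u v) x y y x
        = (1/2) * ∑ i, ∑ j, lam i * lam j * (f i * g j - f j * g i) ^ 2 := by
      have : canonCT (fun u v => φ u v) x y y x = φ x x * φ y y - (φ x y) ^ 2 := by
        simp only [canonCT]
        rw [hφsymm y x]; ring
      rw [this, hphi, hphi, hphi]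
      exact lagrange_like lam f g
    have hden : (inner ℝ x x : ℝ) * (inner ℝ y y : ℝ) - (inner ℝ x y : ℝ) ^ 2
        = (1/2) * ∑ i, ∑ j, (f i * g j - f j * g i) ^ 2 := by
      rw [hinner, hinner, hinner]
      have := lagrange_like (fun _ => 1) f g
      simpa using this
    -- denominator positive
    have hx0 : x ≠ 0 := by
      intro hx
      have := (LinearIndependent.pair_iff.mp hli) 1 0 (by simp [hx])
      simpa using this.1
    have hy0 : y ≠ 0 := by
      intro hy
      have := (LinearIndependent.pair_iff.mp hli) 0 1 (by simp [hy])
      simpa using this.2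
    have hpair := LinearIndependent.pair_iff.mp hli
    have hyn : ‖y‖ ≠ 0 := norm_ne_zero_iff.mpr hy0
    have hxn : ‖x‖ ≠ 0 := norm_ne_zero_iff.mpr hx0
    have h1 : (inner ℝ x y : ℝ) < ‖x‖ * ‖y‖ := by
      rw [inner_lt_norm_mul_iff_real]
      intro hEq
      have := hpair ‖y‖ (-‖x‖) (by rw [neg_smul]; rw [hEq]; simp)
      exact hyn this.1
    have h2 : -(inner ℝ x y : ℝ) < ‖x‖ * ‖y‖ := by
      have h2' : (inner ℝ (-x) y : ℝ) < ‖-x‖ * ‖y‖ := by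
        rw [inner_lt_norm_mul_iff_real]
        intro hEq
        have hEq' : (-‖y‖) • x + (-‖-x‖) • y = 0 := by
          rw [neg_smul, neg_smul, ← smul_neg, hEq]; simp
        have := hpair (-‖y‖) (-‖-x‖) hEq'
        exact hyn (neg_eq_zero.mp this.1)
      rwa [inner_neg_left, norm_neg] at h2'
    have hdpos : 0 < (inner ℝ x x : ℝ) * (inner ℝ y y : ℝ) - (inner ℝ x y : ℝ) ^ 2 := by
      have hxx : (inner ℝ x x : ℝ) = ‖x‖ * ‖x‖ := real_inner_self_eq_norm_mul_norm x
      have hyy : (inner ℝ y y : ℝ) = ‖y‖ * ‖y‖ := real_inner_self_eq_norm_mul_norm y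
      nlinarith [h1, h2]
    -- termwise bounds
    have hub : ∑ i, ∑ j, lam i * lam j * (f i * g j - f j * g i) ^ 2
        ≤ ∑ i, ∑ j, M * (f i * g j - f j * g i) ^ 2 := by
      refine Finset.sum_le_sum fun i _ => Finset.sum_le_sum fun j _ => ?_
      by_cases hij : i = j
      · subst hij; ring_nf; rfl
      · exact mul_le_mul_of_nonneg_right (hM.2 ⟨i, j, hij, rfl⟩) (sq_nonneg _)
    have hlb : ∑ i, ∑ j, m * (f i * g j - f j * g i) ^ 2
        ≤ ∑ i, ∑ j, lam i * lam j * (f i * g j - f j * g i) ^ 2 := by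
      refine Finset.sum_le_sum fun i _ => Finset.sum_le_sum fun j _ => ?_
      by_cases hij : i = j
      · subst hij; ring_nf; rfl
      · exact mul_le_mul_of_nonneg_right (hm.2 ⟨i, j, hij, rfl⟩) (sq_nonneg _)
    have hMsum : ∑ i, ∑ j, M * (f i * g j - f j * g i) ^ 2
        = M * ∑ i, ∑ j, (f i * g j - f j * g i) ^ 2 := by
      simp_rw [← Finset.mul_sum]
    have hmsum : ∑ i, ∑ j, m * (f i * g j - f j * g i) ^ 2
        = m * ∑ i, ∑ j, (f i * g j - f j * g i) ^ 2 := by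
      simp_rw [← Finset.mul_sum]
    constructor
    · rw [sectCurv, le_div_iff₀ hdpos, hnum, hden]
      calc m * ((1/2) * ∑ i, ∑ j, (f i * g j - f j * g i) ^ 2)
          = (1/2) * (m * ∑ i, ∑ j, (f i * g j - f j * g i) ^ 2) := by ring
        _ ≤ (1/2) * ∑ i, ∑ j, lam i * lam j * (f i * g j - f j * g i) ^ 2 := by
            rw [← hmsum]; linarith [hlb]
    · rw [sectCurv, div_le_iff₀ hdpos, hnum, hden]
      calc (1/2) * ∑ i, ∑ j, lam i * lam j * (f i * g j - f j * g i) ^ 2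
          ≤ (1/2) * (M * ∑ i, ∑ j, (f i * g j - f j * g i) ^ 2) := by
            rw [← hMsum]; linarith [hub]
        _ = M * ((1/2) * ∑ i, ∑ j, (f i * g j - f j * g i) ^ 2) := by ring
  · -- reverse inclusion
    rintro ⟨hmc, hcM⟩
    -- realization lemma
    have realize : ∀ p q r : Fin n, p ≠ q → r ≠ q →
        lam p * lam q ≤ c → c ≤ lam r * lam q →
        ∃ x y : V, LinearIndependent ℝ ![x, y] ∧
          c = sectCurv (canonCT (fun u v => φ u v)) x y := by
      intro p q r hpq hrq h1 h2
      by_cases hD : lam r * lam q = lam p * lam q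
      · -- degenerate: c = lam p * lam q
        have hc : c = lam p * lam q := le_antisymm (hD ▸ h2) h1
        refine ⟨b p, b q, ?_, ?_⟩
        · exact li_of_on _ _ (by rw [hbij]; simp) (by rw [hbij]; simp)
            (by rw [hbij]; simp [hpq])
        · rw [sectCurv]
          simp only [canonCT]
          rw [hφb p p, hφb q q, hφb p q, hφb q p, hbij p p, hbij q q, hbij p q, hbij q p]
          simp [hpq, Ne.symm hpq, hc]
      · -- nondegenerate
        have hpr : p ≠ r := by
          intro h; exact hD (by rw [h])
        have hDpos : 0 < lam r * lam q - lam p * lam q := by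
          rcases lt_or_eq_of_le (le_trans h1 h2) with h | h
          · linarith
          · exact absurd h.symm hD
        set s : ℝ := (c - lam p * lam q) / (lam r * lam q - lam p * lam q) with hs
        have hs0 : 0 ≤ s := div_nonneg (by linarith) (le_of_lt hDpos)
        have hs1 : s ≤ 1 := by
          rw [div_le_one hDpos]; linarith
        set a : ℝ := Real.sqrt (1 - s) with ha
        set β : ℝ := Real.sqrt s with hβ
        have ha2 : a * a = 1 - s := Real.mul_self_sqrt (by linarith)
        have hβ2 : β * β = s := Real.mul_self_sqrt hs0
        set x : V := a • b p + β • b r with hx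
        set y : V := b q with hy
        have hxx : (inner ℝ x x : ℝ) = 1 := by
          rw [hx, inner_add_left, inner_add_right, inner_add_right,
            real_inner_smul_left, real_inner_smul_left, real_inner_smul_left,
            real_inner_smul_left, real_inner_smul_right, real_inner_smul_right,
            real_inner_smul_right, real_inner_smul_right,
            hbij p p, hbij p r, hbij r p, hbij r r]
          simp [hpr, Ne.symm hpr]
          linarith [ha2, hβ2]
        have hyy : (inner ℝ y y : ℝ) = 1 := by rw [hy, hbij]; simp
        have hxy : (inner ℝ x y : ℝ) = 0 := by
          rw [hx, hy, inner_add_left, real_inner_smul_left, real_inner_smul_left,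
            hbij p q, hbij r q]
          simp [hpq, hrq]
        -- φ values
        have hφxx : φ x x = (1 - s) * lam p + s * lam r := by
          rw [hx]
          simp only [map_add, map_smul, LinearMap.add_apply, LinearMap.smul_apply,
            smul_eq_mul]
          rw [hφb p p, hφb p r, hφb r p, hφb r r,
            hbij p p, hbij p r, hbij r p, hbij r r]
          simp [hpr, Ne.symm hpr]
          rw [← ha2, ← hβ2]; ring
        have hφyy : φ y y = lam q := by
          rw [hy, hφb q q, hbij q q]; simp
        have hφxy : φ x y = 0 := by
          rw [hx, hy]
          simp only [map_add, map_smul, LinearMap.add_apply, LinearMap.smul_apply,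
            smul_eq_mul]
          rw [hφb p q, hφb r q, hbij p q, hbij r q]
          simp [hpq, hrq]
        have hφyx : φ y x = 0 := by rw [hφsymm y x, hφxy]
        refine ⟨x, y, li_of_on x y hxx hyy hxy, ?_⟩
        rw [sectCurv]
        simp only [canonCT]
        rw [hφxx, hφyy, hφxy, hφyx, hxx, hyy, hxy]
        have : ((1 - s) * lam p + s * lam r) * lam q = c := by
          have : s * (lam r * lam q - lam p * lam q) = c - lam p * lam q := by
            rw [hs]; exact div_mul_cancel₀ _ (ne_of_gt hDpos)
          nlinarith [this]
        rw [this]; norm_num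
    -- find suitable indices
    obtain ⟨i, j, hij, hmv⟩ := hm.1
    obtain ⟨k, l, hkl, hMv⟩ := hM.1
    obtain ⟨p, q, r, hpq, hrq, h1, h2⟩ :
        ∃ p q r : Fin n, p ≠ q ∧ r ≠ q ∧ lam p * lam q ≤ c ∧ c ≤ lam r * lam q := by
      by_cases hlj : l = j
      · exact ⟨i, j, k, hij, hlj ▸ hkl, hmv ▸ hmc, by rw [← hlj]; exact hMv ▸ hcM⟩
      by_cases hli : l = i
      · refine ⟨j, i, k, Ne.symm hij, hli ▸ hkl, ?_, ?_⟩
        · rw [mul_comm]; exact hmv ▸ hmc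
        · rw [← hli]; exact hMv ▸ hcM
      by_cases hkj : k = j
      · refine ⟨i, j, l, hij, fun h => hkl (hkj.trans h.symm) , hmv ▸ hmc, ?_⟩
        · rw [mul_comm, ← hkj]; exact hMv ▸ hcM
      by_cases hki : k = i
      · refine ⟨j, i, l, Ne.symm hij, fun h => hkl (hki.trans h.symm), ?_, ?_⟩
        · rw [mul_comm]; exact hmv ▸ hmc
        · rw [mul_comm, ← hki]; exact hMv ▸ hcM
      · -- all four distinct
        have hil : i ≠ l := fun h => hli h.symm
        have ht1 : m ≤ lam i * lam l := hm.2 ⟨i, l, hil, rfl⟩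
        have ht2 : lam i * lam l ≤ M := hM.2 ⟨i, l, hil, rfl⟩
        rcases le_total c (lam i * lam l) with hcase | hcase
        · refine ⟨j, i, l, Ne.symm hij, Ne.symm hil, ?_, ?_⟩
          · rw [mul_comm]; exact hmv ▸ hmc
          · rw [mul_comm]; exact hcase
        · exact ⟨i, l, k, hil, hkl, hcase, hMv ▸ hcM⟩
    exact realize p q r hpq hrq h1 h2
end

section
/- Let V be a real inner product space of finite dimension n ≥ 2, let φ be a symmetric bilinear form on V, and let λ₁, …, λₙ be the eigenvalues of φ repeated according to multiplicity. Set m = min{λᵢλⱼ : i ≠ j} and M = max{λᵢλⱼ : i ≠ j}. Then for every pair of linearly independent vectors x, y ∈ V, one has m ≤ κ_{R_φ}(x,y) ≤ M. -/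
/-- A weighted Lagrange identity. -/
lemma lagrange_identity {n : ℕ} (c f g : Fin n → ℝ) :
    ∑ i, ∑ j, c i * c j * (f i * g j - f j * g i) ^ 2
      = 2 * ((∑ i, c i * (f i * f i)) * (∑ i, c i * (g i * g i))
        - (∑ i, c i * (f i * g i)) ^ 2) := by
  have key : ∀ i j : Fin n, c i * c j * (f i * g j - f j * g i) ^ 2
      = (c i * (f i * f i)) * (c j * (g j * g j))
        + (c j * (f j * f j)) * (c i * (g i * g i))
        - 2 * ((c i * (f i * g i)) * (c j * (f j * g j))) := by
    intro i j; ring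
  calc ∑ i, ∑ j, c i * c j * (f i * g j - f j * g i) ^ 2
      = ∑ i, ∑ j, ((c i * (f i * f i)) * (c j * (g j * g j))
          + (c j * (f j * f j)) * (c i * (g i * g i))
          - 2 * ((c i * (f i * g i)) * (c j * (f j * g j)))) := by
        simp_rw [key]
    _ = (∑ i, ∑ j, (c i * (f i * f i)) * (c j * (g j * g j)))
          + (∑ i, ∑ j, (c j * (f j * f j)) * (c i * (g i * g i)))
          - 2 * ∑ i, ∑ j, (c i * (f i * g i)) * (c j * (f j * g j)) := by
        simp [Finset.sum_add_distrib, Finset.sum_sub_distrib, Finset.mul_sum]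
    _ = 2 * ((∑ i, c i * (f i * f i)) * (∑ i, c i * (g i * g i))
          - (∑ i, c i * (f i * g i)) ^ 2) := by
        rw [Finset.sum_comm (f := fun i j => (c j * (f j * f j)) * (c i * (g i * g i)))]
        rw [← Finset.sum_mul_sum, ← Finset.sum_mul_sum, sq]
        ring

/-- Every sectional curvature of `R_φ` lies between the minimum and maximum pairwise
products of eigenvalues of `φ`. -/
theorem sectional_curvature_bounds_of_canonCT
    {V : Type*} [NormedAddCommGroup V] [InnerProductSpace ℝ V] [FiniteDimensional ℝ V]
    {n : ℕ} (hn : 2 ≤ n) (hdim : Module.finrank ℝ V = n)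
    (φ : V →ₗ[ℝ] V →ₗ[ℝ] ℝ) (hφsymm : ∀ x y : V, φ x y = φ y x)
    (A : V →ₗ[ℝ] V) (hA : ∀ x y : V, φ x y = (inner ℝ (A x) y : ℝ))
    (b : OrthonormalBasis (Fin n) ℝ V) (lam : Fin n → ℝ)
    (hb : ∀ i, A (b i) = lam i • b i)
    (m M : ℝ)
    (hm : IsLeast {c : ℝ | ∃ i j : Fin n, i ≠ j ∧ c = lam i * lam j} m)
    (hM : IsGreatest {c : ℝ | ∃ i j : Fin n, i ≠ j ∧ c = lam i * lam j} M) :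
    ∀ x y : V, LinearIndependent ℝ ![x, y] →
      m ≤ sectCurv (canonCT (fun u v => φ u v)) x y ∧
      sectCurv (canonCT (fun u v => φ u v)) x y ≤ M := by
  intro x y hxy
  -- coordinates
  set f : Fin n → ℝ := fun i => (inner ℝ x (b i) : ℝ) with hf
  set g : Fin n → ℝ := fun i => (inner ℝ y (b i) : ℝ) with hg
  -- inner products in coordinates
  have hinner : ∀ u v : V, (inner ℝ u v : ℝ) = ∑ i, (inner ℝ u (b i) : ℝ) * (inner ℝ v (b i) : ℝ) := by
    intro u v
    rw [← b.sum_inner_mul_inner u v]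
    congr 1; ext i; rw [real_inner_comm (b i) v]
  -- φ in coordinates
  have hφ : ∀ u v : V, φ u v = ∑ i, lam i * ((inner ℝ u (b i) : ℝ) * (inner ℝ v (b i) : ℝ)) := by
    intro u v
    rw [hA, ← b.sum_inner_mul_inner (A u) v]
    congr 1; ext i
    have h1 : (inner ℝ (A u) (b i) : ℝ) = lam i * (inner ℝ u (b i) : ℝ) := by
      have : (inner ℝ (A u) (b i) : ℝ) = (inner ℝ (A (b i)) u : ℝ) := by
        rw [← hA, ← hA, hφsymm]
      rw [this, hb i, real_inner_smul_left, real_inner_comm]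
    rw [h1, real_inner_comm (b i) v]; ring
  -- denominator and numerator
  set D : ℝ := (inner ℝ x x : ℝ) * (inner ℝ y y : ℝ) - (inner ℝ x y : ℝ) ^ 2 with hD
  set N : ℝ := φ x x * φ y y - φ x y * φ x y with hN
  have hD2 : 2 * D = ∑ i, ∑ j, (1 : ℝ) * 1 * (f i * g j - f j * g i) ^ 2 := by
    rw [lagrange_identity (fun _ => (1 : ℝ)) f g, hD, hinner x x, hinner y y, hinner x y]
    simp [hf, hg]
  have hN2 : 2 * N = ∑ i, ∑ j, lam i * lam j * (f i * g j - f j * g i) ^ 2 := by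
    rw [lagrange_identity lam f g, hN, hφ x x, hφ y y, hφ x y]
    rw [sq]
  -- termwise bounds
  have hterm_lo : ∀ i ∈ Finset.univ, ∀ j ∈ Finset.univ,
      m * ((1:ℝ) * 1 * (f i * g j - f j * g i) ^ 2)
        ≤ lam i * lam j * (f i * g j - f j * g i) ^ 2 := by
    intro i _ j _
    rcases eq_or_ne i j with rfl | hij
    · simp
    · have hmem : lam i * lam j ∈ {c : ℝ | ∃ i j : Fin n, i ≠ j ∧ c = lam i * lam j} :=
        ⟨i, j, hij, rfl⟩
      have := hm.2 hmem
      nlinarith [sq_nonneg (f i * g j - f j * g i)]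
  have hterm_hi : ∀ i ∈ Finset.univ, ∀ j ∈ Finset.univ,
      lam i * lam j * (f i * g j - f j * g i) ^ 2
        ≤ M * ((1:ℝ) * 1 * (f i * g j - f j * g i) ^ 2) := by
    intro i _ j _
    rcases eq_or_ne i j with rfl | hij
    · simp
    · have hmem : lam i * lam j ∈ {c : ℝ | ∃ i j : Fin n, i ≠ j ∧ c = lam i * lam j} :=
        ⟨i, j, hij, rfl⟩
      have := hM.2 hmem
      nlinarith [sq_nonneg (f i * g j - f j * g i)]
  have hlo : m * (2 * D) ≤ 2 * N := by
    rw [hD2, hN2, Finset.mul_sum]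
    refine Finset.sum_le_sum fun i hi => ?_
    rw [Finset.mul_sum]
    exact Finset.sum_le_sum fun j hj => hterm_lo i hi j hj
  have hhi : 2 * N ≤ M * (2 * D) := by
    rw [hD2, hN2, Finset.mul_sum]
    refine Finset.sum_le_sum fun i hi => ?_
    rw [Finset.mul_sum]
    exact Finset.sum_le_sum fun j hj => hterm_hi i hi j hj
  -- positivity of the denominator via strict Cauchy-Schwarz
  have hy0 : y ≠ 0 := by
    intro h; exact hxy.ne_zero 1 (by simp [h])
  have hny : ‖y‖ ≠ 0 := norm_ne_zero_iff.mpr hy0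
  have hli : ∀ a : ℝ, a • y ≠ x := (linearIndependent_fin2.mp hxy).2
  have key : ∀ c : ℝ, ‖y‖ • x ≠ c • y := by
    intro c h
    apply hli (c / ‖y‖)
    have : x = (c / ‖y‖) • y := by
      rw [div_eq_inv_mul, mul_smul, ← h, smul_smul, inv_mul_cancel₀ hny, one_smul]
    exact this.symm
  have hcs1 : (inner ℝ x y : ℝ) < ‖x‖ * ‖y‖ := by
    rw [inner_lt_norm_mul_iff_real]
    exact key ‖x‖
  have hcs2 : -(‖x‖ * ‖y‖) < (inner ℝ x y : ℝ) := by
    have h := inner_lt_norm_mul_iff_real (x := x) (y := -y)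
    rw [inner_neg_right, norm_neg] at h
    have := h.mpr (by
      intro hc
      exact key (-‖x‖) (by rw [hc, smul_neg, neg_smul])
      )
    linarith
  have hDpos : 0 < D := by
    have hsq : (inner ℝ x y : ℝ) ^ 2 < (‖x‖ * ‖y‖) ^ 2 := sq_lt_sq' hcs2 hcs1
    have hxx : (inner ℝ x x : ℝ) = ‖x‖ * ‖x‖ := real_inner_self_eq_norm_mul_norm x
    have hyy : (inner ℝ y y : ℝ) = ‖y‖ * ‖y‖ := real_inner_self_eq_norm_mul_norm y
    rw [hD, hxx, hyy]
    nlinarith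
  -- conclude
  have hct : canonCT (fun u v => φ u v) x y y x = N := by
    simp only [canonCT, hN]
    rw [hφsymm y x]
  have hsc : sectCurv (canonCT (fun u v => φ u v)) x y = N / D := by
    rw [sectCurv, hct, hD]
  rw [hsc]
  constructor
  · rw [le_div_iff₀ hDpos]; linarith
  · rw [div_le_iff₀ hDpos]; linarith
end

section
/- Let V be a real inner product space of finite dimension n ≥ 2, let φ be a symmetric bilinear form on V, and let λ₁, …, λₙ be the eigenvalues of φ repeated according to multiplicity. Set M = max{λᵢλⱼ : i ≠ j}. Then M is the maximum of the sectional curvatures of R_φ: κ_{R_φ}(x,y) ≤ M for all linearly independent x, y, and there exist orthonormal vectors x, y ∈ V with κ_{R_φ}(x,y) = M. -/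
/-- Lagrange-type identity. -/
lemma lagrange_id {n : ℕ} (a u v : Fin n → ℝ) :
    2 * ((∑ i, a i * (u i * u i)) * (∑ i, a i * (v i * v i)) -
      (∑ i, a i * (u i * v i)) ^ 2) =
    ∑ i, ∑ j, a i * a j * (u i * v j - u j * v i) ^ 2 := by
  have h1 : (∑ i, a i * (u i * u i)) * (∑ i, a i * (v i * v i)) =
      ∑ i, ∑ j, a i * (u i * u i) * (a j * (v j * v j)) := by
    rw [Finset.sum_mul_sum]
  have h3 : ∑ i, ∑ j, a i * (v i * v i) * (a j * (u j * u j)) =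
      (∑ i, a i * (v i * v i)) * (∑ i, a i * (u i * u i)) := by
    rw [Finset.sum_mul_sum]
  have h2 : (∑ i, a i * (u i * v i)) ^ 2 =
      ∑ i, ∑ j, a i * (u i * v i) * (a j * (u j * v j)) := by
    rw [sq, Finset.sum_mul_sum]
  symm
  calc ∑ i, ∑ j, a i * a j * (u i * v j - u j * v i) ^ 2
      = ∑ i, ∑ j, (a i * (u i * u i) * (a j * (v j * v j))
          + a i * (v i * v i) * (a j * (u j * u j))
          - 2 * (a i * (u i * v i) * (a j * (u j * v j)))) := by
        refine Finset.sum_congr rfl fun i _ => Finset.sum_congr rfl fun j _ => by ring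
    _ = (∑ i, ∑ j, a i * (u i * u i) * (a j * (v j * v j)))
        + (∑ i, ∑ j, a i * (v i * v i) * (a j * (u j * u j)))
        - 2 * (∑ i, ∑ j, a i * (u i * v i) * (a j * (u j * v j))) := by
        simp only [Finset.sum_add_distrib, Finset.sum_sub_distrib, ← Finset.mul_sum]
    _ = 2 * ((∑ i, a i * (u i * u i)) * (∑ i, a i * (v i * v i)) -
        (∑ i, a i * (u i * v i)) ^ 2) := by
        rw [← h1, h3, ← h2]; ring

/-- The maximum pairwise product `M` of eigenvalues of `φ` is the maximum sectional
curvature of `R_φ`, and it is attained on an orthonormal pair. -/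
theorem max_sectional_curvature_of_canonCT
    {V : Type*} [NormedAddCommGroup V] [InnerProductSpace ℝ V] [FiniteDimensional ℝ V]
    {n : ℕ} (hn : 2 ≤ n) (hdim : Module.finrank ℝ V = n)
    (φ : V →ₗ[ℝ] V →ₗ[ℝ] ℝ) (hφsymm : ∀ x y : V, φ x y = φ y x)
    (A : V →ₗ[ℝ] V) (hA : ∀ x y : V, φ x y = (inner ℝ (A x) y : ℝ))
    (b : OrthonormalBasis (Fin n) ℝ V) (lam : Fin n → ℝ)
    (hb : ∀ i, A (b i) = lam i • b i)
    (M : ℝ)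
    (hM : IsGreatest {c : ℝ | ∃ i j : Fin n, i ≠ j ∧ c = lam i * lam j} M) :
    (∀ x y : V, LinearIndependent ℝ ![x, y] →
      sectCurv (canonCT (fun u v => φ u v)) x y ≤ M) ∧
    (∃ x y : V, Orthonormal ℝ ![x, y] ∧
      sectCurv (canonCT (fun u v => φ u v)) x y = M) := by
  have hφb : ∀ i j : Fin n, φ (b i) (b j) = if i = j then lam i else 0 := by
    intro i j
    rw [hA, hb, inner_smul_left]
    rw [orthonormal_iff_ite.mp b.orthonormal i j]
    split <;> simp
  -- expansion of φ in coordinates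
  have hφ_sum : ∀ x y : V,
      φ x y = ∑ i, lam i * ((inner ℝ (b i) x : ℝ) * (inner ℝ (b i) y : ℝ)) := by
    intro x y
    have h1 : φ x y = ∑ i, (inner ℝ (A x) (b i) : ℝ) * (inner ℝ (b i) y : ℝ) := by
      rw [hA]; exact (b.sum_inner_mul_inner (A x) y).symm
    rw [h1]
    refine Finset.sum_congr rfl fun i _ => ?_
    have hAxbi : (inner ℝ (A x) (b i) : ℝ) = lam i * (inner ℝ (b i) x : ℝ) := by
      have h2 : φ x (b i) = φ (b i) x := hφsymm x (b i)
      rw [hA (b i) x, hb i, inner_smul_left] at h2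
      rw [← hA x (b i), h2]
      simp [real_inner_comm]
    rw [hAxbi]; ring
  have hinner_sum : ∀ x y : V,
      (inner ℝ x y : ℝ) = ∑ i, (inner ℝ (b i) x : ℝ) * (inner ℝ (b i) y : ℝ) := by
    intro x y
    rw [← b.sum_inner_mul_inner x y]
    exact Finset.sum_congr rfl fun i _ => by rw [real_inner_comm x (b i)]
  constructor
  · -- the bound
    intro x y hli
    set u : Fin n → ℝ := fun i => (inner ℝ (b i) x : ℝ) with hu
    set v : Fin n → ℝ := fun i => (inner ℝ (b i) y : ℝ) with hv
    have e1 : φ x x = ∑ i, lam i * (u i * u i) := hφ_sum x x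
    have e2 : φ y y = ∑ i, lam i * (v i * v i) := hφ_sum y y
    have e3 : φ x y = ∑ i, lam i * (u i * v i) := hφ_sum x y
    have e4 : φ y x = ∑ i, lam i * (u i * v i) := by rw [← hφsymm]; exact e3
    have hF : canonCT (fun u v => φ u v) x y y x =
        (∑ i, lam i * (u i * u i)) * (∑ i, lam i * (v i * v i)) -
          (∑ i, lam i * (u i * v i)) ^ 2 := by
      simp only [canonCT]
      rw [e1, e2, e3, e4]; ring
    have g1 : (inner ℝ x x : ℝ) = ∑ i, u i * u i := hinner_sum x x
    have g2 : (inner ℝ y y : ℝ) = ∑ i, v i * v i := hinner_sum y y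
    have g3 : (inner ℝ x y : ℝ) = ∑ i, u i * v i := hinner_sum x y
    have hG : (inner ℝ x x : ℝ) * (inner ℝ y y : ℝ) - (inner ℝ x y : ℝ) ^ 2 =
        (∑ i, (1:ℝ) * (u i * u i)) * (∑ i, (1:ℝ) * (v i * v i)) -
          (∑ i, (1:ℝ) * (u i * v i)) ^ 2 := by
      rw [g1, g2, g3]; simp only [one_mul]
    -- the two Lagrange identities
    have LF := lagrange_id lam u v
    have LG := lagrange_id (fun _ => (1:ℝ)) u v
    -- termwise bound
    have hterm : ∀ i j : Fin n,
        lam i * lam j * (u i * v j - u j * v i) ^ 2 ≤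
        M * ((u i * v j - u j * v i) ^ 2) := by
      intro i j
      by_cases hij : i = j
      · subst hij; simp
      · have hMij : lam i * lam j ≤ M := hM.2 ⟨i, j, hij, rfl⟩
        exact mul_le_mul_of_nonneg_right hMij (sq_nonneg _)
    have hsum : ∑ i, ∑ j, lam i * lam j * (u i * v j - u j * v i) ^ 2 ≤
        M * ∑ i, ∑ j, (u i * v j - u j * v i) ^ 2 := by
      rw [Finset.mul_sum]
      refine Finset.sum_le_sum fun i _ => ?_
      rw [Finset.mul_sum]
      exact Finset.sum_le_sum fun j _ => hterm i j
    -- positivity of the denominator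
    have hx0 : x ≠ 0 := by
      have := hli.ne_zero 0; simpa using this
    have hy0 : y ≠ 0 := by
      have := hli.ne_zero 1; simpa using this
    have hpair : ∀ s t : ℝ, s • x + t • y = 0 → s = 0 ∧ t = 0 :=
      LinearIndependent.pair_iff.mp hli
    have hne1 : ‖y‖ • x ≠ ‖x‖ • y := by
      intro h
      have : ‖y‖ • x + (-‖x‖) • y = 0 := by rw [neg_smul, h]; simp
      have := (hpair _ _ this).1
      exact hy0 (norm_eq_zero.mp this)
    have hne2 : ‖y‖ • (-x) ≠ ‖-x‖ • y := by
      intro h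
      rw [norm_neg, smul_neg] at h
      have : (-‖y‖) • x + (-‖x‖) • y = 0 := by
        rw [neg_smul, h, neg_smul]; simp
      have h2 := neg_eq_zero.mp (hpair _ _ this).2
      exact hx0 (norm_eq_zero.mp h2)
    have hlt1 : (inner ℝ x y : ℝ) < ‖x‖ * ‖y‖ := inner_lt_norm_mul_iff_real.mpr hne1
    have hlt2 : (inner ℝ (-x) y : ℝ) < ‖-x‖ * ‖y‖ := inner_lt_norm_mul_iff_real.mpr hne2
    rw [inner_neg_left, norm_neg] at hlt2
    have hsq : (inner ℝ x y : ℝ) ^ 2 < (‖x‖ * ‖y‖) ^ 2 := by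
      have := sq_lt_sq' (by linarith) hlt1
      exact this
    have hG0 : 0 < (inner ℝ x x : ℝ) * (inner ℝ y y : ℝ) - (inner ℝ x y : ℝ) ^ 2 := by
      have hxx : (inner ℝ x x : ℝ) = ‖x‖ ^ 2 := real_inner_self_eq_norm_sq x
      have hyy : (inner ℝ y y : ℝ) = ‖y‖ ^ 2 := real_inner_self_eq_norm_sq y
      rw [hxx, hyy]
      nlinarith [hsq]
    -- conclude
    rw [sectCurv, div_le_iff₀ hG0]
    have hFle : canonCT (fun u v => φ u v) x y y x ≤
        M * ((inner ℝ x x : ℝ) * (inner ℝ y y : ℝ) - (inner ℝ x y : ℝ) ^ 2) := by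
      rw [hF, hG]
      have l2 : 2 * ((∑ i, (1:ℝ) * (u i * u i)) * (∑ i, (1:ℝ) * (v i * v i)) -
          (∑ i, (1:ℝ) * (u i * v i)) ^ 2) =
          ∑ i, ∑ j, (u i * v j - u j * v i) ^ 2 := by
        rw [LG]
        exact Finset.sum_congr rfl fun i _ => Finset.sum_congr rfl fun j _ => by ring
      have l3 : M * (2 * ((∑ i, (1:ℝ) * (u i * u i)) * (∑ i, (1:ℝ) * (v i * v i)) -
          (∑ i, (1:ℝ) * (u i * v i)) ^ 2)) =
          M * ∑ i, ∑ j, (u i * v j - u j * v i) ^ 2 := by rw [l2]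
      linarith [hsum, LF, l3]
    exact hFle
  · -- attainment
    obtain ⟨i, j, hij, hMeq⟩ := hM.1
    refine ⟨b i, b j, ?_, ?_⟩
    · constructor
      · intro s
        fin_cases s
        · simpa using b.orthonormal.1 i
        · simpa using b.orthonormal.1 j
      · intro s t hst
        fin_cases s <;> fin_cases t
        · exact absurd rfl hst
        · simpa using b.orthonormal.2 hij
        · simpa using b.orthonormal.2 (Ne.symm hij)
        · exact absurd rfl hst
    · have hbii : (inner ℝ (b i) (b i) : ℝ) = 1 := by
        rw [real_inner_self_eq_norm_sq]; simp [b.orthonormal.1 i]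
      have hbjj : (inner ℝ (b j) (b j) : ℝ) = 1 := by
        rw [real_inner_self_eq_norm_sq]; simp [b.orthonormal.1 j]
      have hbij : (inner ℝ (b i) (b j) : ℝ) = 0 := b.orthonormal.2 hij
      simp only [sectCurv, canonCT]
      rw [hφb i i, hφb j j, hφb i j, hφb j i, if_pos rfl, if_pos rfl,
        if_neg hij, if_neg (Ne.symm hij), hbii, hbjj, hbij]
      rw [hMeq]
      norm_num
end

section
/- Let V be a real inner product space of finite dimension n ≥ 2, let φ be a symmetric bilinear form on V, and let λ₁, …, λₙ be the eigenvalues of φ repeated according to multiplicity. Set m = min{λᵢλⱼ : i ≠ j}. Then m is the minimum of the sectional curvatures of R_φ: κ_{R_φ}(x,y) ≥ m for all linearly independent x, y, and there exist orthonormal vectors x, y ∈ V with κ_{R_φ}(x,y) = m. -/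
/-- Lagrange-type identity for weighted sums. -/
lemma lagrange_key {n : ℕ} (μ a c : Fin n → ℝ) :
    ∑ i, ∑ j, μ i * μ j * (a i * c j - a j * c i) ^ 2
    = 2 * ((∑ i, μ i * (a i * a i)) * (∑ i, μ i * (c i * c i))
        - (∑ i, μ i * (a i * c i)) ^ 2) := by
  have e1 : (∑ i, μ i * (a i * a i)) * (∑ i, μ i * (c i * c i))
      = ∑ i, ∑ j, (μ i * (a i * a i)) * (μ j * (c j * c j)) := Finset.sum_mul_sum _ _ _ _
  have e3 : (∑ i, μ i * (c i * c i)) * (∑ i, μ i * (a i * a i))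
      = ∑ i, ∑ j, (μ i * (c i * c i)) * (μ j * (a j * a j)) := Finset.sum_mul_sum _ _ _ _
  have e2 : (∑ i, μ i * (a i * c i)) * (∑ i, μ i * (a i * c i))
      = ∑ i, ∑ j, (μ i * (a i * c i)) * (μ j * (a j * c j)) := Finset.sum_mul_sum _ _ _ _
  calc ∑ i, ∑ j, μ i * μ j * (a i * c j - a j * c i) ^ 2
      = ∑ i, ∑ j, ((μ i * (a i * a i)) * (μ j * (c j * c j))
          + (μ i * (c i * c i)) * (μ j * (a j * a j))
          - 2 * ((μ i * (a i * c i)) * (μ j * (a j * c j)))) := by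
        refine Finset.sum_congr rfl fun i _ => Finset.sum_congr rfl fun j _ => by ring
    _ = (∑ i, ∑ j, (μ i * (a i * a i)) * (μ j * (c j * c j)))
        + (∑ i, ∑ j, (μ i * (c i * c i)) * (μ j * (a j * a j)))
        - 2 * ∑ i, ∑ j, (μ i * (a i * c i)) * (μ j * (a j * c j)) := by
        simp [Finset.sum_add_distrib, Finset.sum_sub_distrib, Finset.mul_sum]
    _ = _ := by rw [← e1, ← e3, ← e2]; ring

/-- The minimum pairwise product `m` of eigenvalues of `φ` is the minimum sectional
curvature of `R_φ`, and it is attained on an orthonormal pair. -/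
theorem min_sectional_curvature_of_canonCT
    {V : Type*} [NormedAddCommGroup V] [InnerProductSpace ℝ V] [FiniteDimensional ℝ V]
    {n : ℕ} (hn : 2 ≤ n) (hdim : Module.finrank ℝ V = n)
    (φ : V →ₗ[ℝ] V →ₗ[ℝ] ℝ) (hφsymm : ∀ x y : V, φ x y = φ y x)
    (A : V →ₗ[ℝ] V) (hA : ∀ x y : V, φ x y = (inner ℝ (A x) y : ℝ))
    (b : OrthonormalBasis (Fin n) ℝ V) (lam : Fin n → ℝ)
    (hb : ∀ i, A (b i) = lam i • b i)
    (m : ℝ)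
    (hm : IsLeast {c : ℝ | ∃ i j : Fin n, i ≠ j ∧ c = lam i * lam j} m) :
    (∀ x y : V, LinearIndependent ℝ ![x, y] →
      m ≤ sectCurv (canonCT (fun u v => φ u v)) x y) ∧
    (∃ x y : V, Orthonormal ℝ ![x, y] ∧
      sectCurv (canonCT (fun u v => φ u v)) x y = m) := by
  have hib := orthonormal_iff_ite.mp b.orthonormal
  have hsa : ∀ u w : V, (inner ℝ (A u) w : ℝ) = (inner ℝ u (A w) : ℝ) := by
    intro u w
    rw [← hA, hφsymm, hA, real_inner_comm]
  have hinner : ∀ u v : V,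
      (inner ℝ u v : ℝ) = ∑ i, (inner ℝ u (b i) : ℝ) * (inner ℝ v (b i) : ℝ) := by
    intro u v
    rw [← b.sum_inner_mul_inner u v]
    exact Finset.sum_congr rfl fun i _ => by rw [real_inner_comm (b i) v]
  have hphi : ∀ u v : V,
      φ u v = ∑ i, lam i * ((inner ℝ u (b i) : ℝ) * (inner ℝ v (b i) : ℝ)) := by
    intro u v
    rw [hA, ← b.sum_inner_mul_inner (A u) v]
    refine Finset.sum_congr rfl fun i _ => ?_
    rw [real_inner_comm (b i) v, hsa, hb, real_inner_smul_right]
    ring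
  have hmle : ∀ i j : Fin n, i ≠ j → m ≤ lam i * lam j := fun i j hij =>
    hm.2 ⟨i, j, hij, rfl⟩
  constructor
  · intro x y hli
    set a : Fin n → ℝ := fun i => (inner ℝ x (b i) : ℝ) with ha
    set c : Fin n → ℝ := fun i => (inner ℝ y (b i) : ℝ) with hc
    have hx0 : x ≠ 0 := hli.ne_zero 0
    have hy0 : y ≠ 0 := by
      have := hli.ne_zero 1; simpa using this
    have hpair := LinearIndependent.pair_iff.mp hli
    have h1 : ‖y‖ • x ≠ ‖x‖ • y := by
      intro h
      have h0 : ‖y‖ • x + (-‖x‖) • y = 0 := by rw [neg_smul, h]; abel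
      exact norm_ne_zero_iff.mpr hy0 (hpair _ _ h0).1
    have h2 : ‖-y‖ • x ≠ ‖x‖ • (-y) := by
      intro h
      rw [norm_neg, smul_neg] at h
      have h0 : ‖y‖ • x + ‖x‖ • y = 0 := by rw [h]; abel
      exact norm_ne_zero_iff.mpr hy0 (hpair _ _ h0).1
    have hcs1 : (inner ℝ x y : ℝ) < ‖x‖ * ‖y‖ := inner_lt_norm_mul_iff_real.mpr h1
    have hcs2 : -(‖x‖ * ‖y‖) < (inner ℝ x y : ℝ) := by
      have := inner_lt_norm_mul_iff_real.mpr h2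
      rw [inner_neg_right, norm_neg] at this
      linarith
    have hDpos : 0 < (inner ℝ x x : ℝ) * (inner ℝ y y : ℝ) - (inner ℝ x y : ℝ) ^ 2 := by
      have hsq : (inner ℝ x y : ℝ) ^ 2 < (‖x‖ * ‖y‖) ^ 2 := sq_lt_sq' hcs2 hcs1
      rw [real_inner_self_eq_norm_sq, real_inner_self_eq_norm_sq]
      nlinarith
    have hxx : (inner ℝ x x : ℝ) = ∑ i, a i * a i := hinner x x
    have hyy : (inner ℝ y y : ℝ) = ∑ i, c i * c i := hinner y y
    have hxy : (inner ℝ x y : ℝ) = ∑ i, a i * c i := hinner x y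
    have hpx : φ x x = ∑ i, lam i * (a i * a i) := hphi x x
    have hpy : φ y y = ∑ i, lam i * (c i * c i) := hphi y y
    have hpxy : φ x y = ∑ i, lam i * (a i * c i) := hphi x y
    have hD : (inner ℝ x x : ℝ) * (inner ℝ y y : ℝ) - (inner ℝ x y : ℝ) ^ 2
        = (1 / 2) * ∑ i, ∑ j, (a i * c j - a j * c i) ^ 2 := by
      have h2 := lagrange_key (fun _ : Fin n => (1 : ℝ)) a c
      simp only [one_mul] at h2
      rw [hxx, hyy, hxy]
      linear_combination -h2 / 2
    have hN : φ x x * φ y y - (φ x y) ^ 2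
        = (1 / 2) * ∑ i, ∑ j, lam i * lam j * (a i * c j - a j * c i) ^ 2 := by
      rw [hpx, hpy, hpxy]
      linear_combination -(lagrange_key lam a c) / 2
    have hmono : m * ((inner ℝ x x : ℝ) * (inner ℝ y y : ℝ) - (inner ℝ x y : ℝ) ^ 2)
        ≤ φ x x * φ y y - (φ x y) ^ 2 := by
      rw [hD, hN]
      rw [show ∀ s t : ℝ, s * ((1/2) * t) = (1/2) * (s * t) from fun s t => by ring]
      refine mul_le_mul_of_nonneg_left ?_ (by norm_num)
      rw [Finset.mul_sum]
      refine Finset.sum_le_sum fun i _ => ?_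
      rw [Finset.mul_sum]
      refine Finset.sum_le_sum fun j _ => ?_
      by_cases hij : i = j
      · subst hij
        simp
      · exact mul_le_mul_of_nonneg_right (hmle i j hij) (sq_nonneg _)
    have hnum : canonCT (fun u v => φ u v) x y y x = φ x x * φ y y - (φ x y) ^ 2 := by
      simp only [canonCT]
      rw [hφsymm y x]
      ring
    rw [sectCurv, hnum, le_div_iff₀ hDpos]
    exact hmono
  · obtain ⟨i, j, hij, hmij⟩ := hm.1
    have hφb : ∀ k l : Fin n, φ (b k) (b l) = lam k * (if k = l then 1 else 0) := by
      intro k l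
      rw [hA, hb, real_inner_smul_left, hib k l]
    refine ⟨b i, b j, ?_, ?_⟩
    · rw [orthonormal_iff_ite]
      intro k l
      fin_cases k <;> fin_cases l <;>
        simp [Matrix.cons_val_zero, Matrix.cons_val_one, Matrix.head_cons,
          hib, hij, Ne.symm hij]
    · have hii : (inner ℝ (b i) (b i) : ℝ) = 1 := by simpa using hib i i
      have hjj : (inner ℝ (b j) (b j) : ℝ) = 1 := by simpa using hib j j
      have hij0 : (inner ℝ (b i) (b j) : ℝ) = 0 := by simpa [hij] using hib i j
      simp only [sectCurv, canonCT, hφb, hii, hjj, hij0, if_pos rfl, if_neg hij,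
        if_neg (Ne.symm hij)]
      rw [hmij]
      norm_num
end

section
/- Let V be a real inner product space of finite dimension n ≥ 2, let φ be a symmetric bilinear form on V, and let λ₁, …, λₙ be the eigenvalues of φ repeated according to multiplicity. Set m = min{λᵢλⱼ : i ≠ j} and M = max{λᵢλⱼ : i ≠ j}. Then for every real number c with m ≤ c ≤ M, there exist linearly independent vectors x, y ∈ V with κ_{R_φ}(x,y) = c. -/
lemma aux_base {V : Type*} [NormedAddCommGroup V] [InnerProductSpace ℝ V]
    {n : ℕ} (b : OrthonormalBasis (Fin n) ℝ V)
    (φ : V →ₗ[ℝ] V →ₗ[ℝ] ℝ) (lam : Fin n → ℝ)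
    (hφb : ∀ p q, φ (b p) (b q) = if p = q then lam p else 0)
    (i j : Fin n) (hij : i ≠ j) :
    ∃ x y : V, LinearIndependent ℝ ![x, y] ∧
      sectCurv (canonCT (fun u v => φ u v)) x y = lam i * lam j := by
  have hinner : ∀ p q : Fin n, (inner ℝ (b p) (b q) : ℝ) = if p = q then 1 else 0 :=
    orthonormal_iff_ite.mp b.orthonormal
  refine ⟨b i, b j, ?_, ?_⟩
  · rw [LinearIndependent.pair_iff]
    intro s t hst
    have h1 : (inner ℝ (b i) (s • b i + t • b j) : ℝ) = s := by
      rw [inner_add_right, real_inner_smul_right, real_inner_smul_right, hinner, hinner]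
      simp [hij]
    have h2 : (inner ℝ (b j) (s • b i + t • b j) : ℝ) = t := by
      rw [inner_add_right, real_inner_smul_right, real_inner_smul_right, hinner, hinner]
      simp [hij.symm]
    rw [hst, inner_zero_right] at h1 h2
    exact ⟨h1.symm, h2.symm⟩
  · simp only [sectCurv, canonCT, hinner, hφb]
    simp [hij, hij.symm]

lemma aux_key {V : Type*} [NormedAddCommGroup V] [InnerProductSpace ℝ V]
    {n : ℕ} (b : OrthonormalBasis (Fin n) ℝ V)
    (φ : V →ₗ[ℝ] V →ₗ[ℝ] ℝ) (lam : Fin n → ℝ)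
    (hφb : ∀ p q, φ (b p) (b q) = if p = q then lam p else 0)
    (i j k : Fin n) (hij : i ≠ j) (hik : i ≠ k) (hjk : j ≠ k)
    (s : ℝ) (h0 : 0 ≤ s) (h1 : s ≤ 1) :
    ∃ x y : V, LinearIndependent ℝ ![x, y] ∧
      sectCurv (canonCT (fun u v => φ u v)) x y
        = lam i * ((1 - s) * lam j + s * lam k) := by
  have hinner : ∀ p q : Fin n, (inner ℝ (b p) (b q) : ℝ) = if p = q then 1 else 0 :=
    orthonormal_iff_ite.mp b.orthonormal
  set a : ℝ := Real.sqrt (1 - s) with ha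
  set t : ℝ := Real.sqrt s with ht
  have ha2 : a * a = 1 - s := Real.mul_self_sqrt (by linarith)
  have ht2 : t * t = s := Real.mul_self_sqrt h0
  have ha2' : a ^ 2 = 1 - s := by rw [sq]; exact ha2
  have ht2' : t ^ 2 = s := by rw [sq]; exact ht2
  set x := b i with hx
  set y := a • b j + t • b k with hy
  have hxx : (inner ℝ x x : ℝ) = 1 := by rw [hx, hinner]; simp
  have hxy : (inner ℝ x y : ℝ) = 0 := by
    rw [hx, hy, inner_add_right, real_inner_smul_right, real_inner_smul_right,
      hinner, hinner]
    simp [hij, hik]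
  have hyx : (inner ℝ y x : ℝ) = 0 := by rw [real_inner_comm]; exact hxy
  have hyy : (inner ℝ y y : ℝ) = 1 := by
    simp only [hy, inner_add_left, inner_add_right, real_inner_smul_left,
      real_inner_smul_right, hinner]
    simp only [if_pos rfl, if_neg hjk, if_neg hjk.symm]
    simp only [if_true]
    linear_combination ha2 + ht2
  have hφxx : φ x x = lam i := by rw [hx, hφb]; simp
  have hφxy : φ x y = 0 := by
    rw [hx, hy, map_add, LinearMap.map_smul, LinearMap.map_smul]
    simp only [smul_eq_mul, hφb]
    simp [hij, hik]
  have hφyx : φ y x = 0 := by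
    rw [hx, hy, map_add]
    simp only [LinearMap.map_smul, LinearMap.add_apply, LinearMap.smul_apply,
      smul_eq_mul, hφb]
    simp [hij.symm, hik.symm]
  have hφyy : φ y y = (1 - s) * lam j + s * lam k := by
    rw [hy, map_add]
    simp only [LinearMap.map_smul, LinearMap.add_apply, LinearMap.smul_apply,
      map_add, smul_eq_mul, hφb]
    simp only [if_pos rfl, if_neg hjk, if_neg hjk.symm]
    simp only [if_true]
    linear_combination lam j * ha2 + lam k * ht2
  refine ⟨x, y, ?_, ?_⟩
  · rw [LinearIndependent.pair_iff]
    intro p q hpq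
    have h1 : (inner ℝ x (p • x + q • y) : ℝ) = p := by
      rw [inner_add_right, real_inner_smul_right, real_inner_smul_right, hxx, hxy]; ring
    have h2 : (inner ℝ y (p • x + q • y) : ℝ) = q := by
      rw [inner_add_right, real_inner_smul_right, real_inner_smul_right, hyx, hyy]; ring
    rw [hpq, inner_zero_right] at h1 h2
    exact ⟨h1.symm, h2.symm⟩
  · simp only [sectCurv, canonCT, hxx, hxy, hyy, hφxx, hφxy, hφyx, hφyy]
    ring

lemma aux_between {V : Type*} [NormedAddCommGroup V] [InnerProductSpace ℝ V]
    {n : ℕ} (b : OrthonormalBasis (Fin n) ℝ V)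
    (φ : V →ₗ[ℝ] V →ₗ[ℝ] ℝ) (lam : Fin n → ℝ)
    (hφb : ∀ p q, φ (b p) (b q) = if p = q then lam p else 0)
    (i j k : Fin n) (hji : j ≠ i) (hki : k ≠ i) (c : ℝ)
    (hpc : lam i * lam j ≤ c) (hcq : c ≤ lam i * lam k) :
    ∃ x y : V, LinearIndependent ℝ ![x, y] ∧
      sectCurv (canonCT (fun u v => φ u v)) x y = c := by
  set p := lam i * lam j with hp
  set q := lam i * lam k with hq
  by_cases hpq : p = q
  · have hc : c = p := le_antisymm (hpq ▸ hcq) hpc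
    obtain ⟨x, y, hli, hκ⟩ := aux_base b φ lam hφb i j hji.symm
    exact ⟨x, y, hli, by rw [hκ, ← hp, ← hc]⟩
  · have hjk : j ≠ k := by rintro rfl; exact hpq rfl
    have hq_p : 0 < q - p := by
      rcases lt_or_ge p q with h | h
      · linarith
      · exact absurd (le_antisymm (hpc.trans hcq) h) hpq
    set s := (c - p) / (q - p) with hs
    have h0 : 0 ≤ s := div_nonneg (by linarith) hq_p.le
    have h1 : s ≤ 1 := (div_le_one hq_p).mpr (by linarith)
    obtain ⟨x, y, hli, hκ⟩ := aux_key b φ lam hφb i j k hji.symm hki.symm hjk s h0 h1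
    refine ⟨x, y, hli, ?_⟩
    rw [hκ]
    have : lam i * ((1 - s) * lam j + s * lam k) = p + s * (q - p) := by
      rw [hp, hq]; ring
    rw [this, hs, div_mul_cancel₀ _ hq_p.ne']
    ring

/-- Every value in `[m, M]` (the interval of pairwise products of eigenvalues of `φ`)
is attained as a sectional curvature of `R_φ`. -/
theorem sectional_curvature_attains_of_canonCT
    {V : Type*} [NormedAddCommGroup V] [InnerProductSpace ℝ V] [FiniteDimensional ℝ V]
    {n : ℕ} (hn : 2 ≤ n) (hdim : Module.finrank ℝ V = n)
    (φ : V →ₗ[ℝ] V →ₗ[ℝ] ℝ) (hφsymm : ∀ x y : V, φ x y = φ y x)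
    (A : V →ₗ[ℝ] V) (hA : ∀ x y : V, φ x y = (inner ℝ (A x) y : ℝ))
    (b : OrthonormalBasis (Fin n) ℝ V) (lam : Fin n → ℝ)
    (hb : ∀ i, A (b i) = lam i • b i)
    (m M : ℝ)
    (hm : IsLeast {c : ℝ | ∃ i j : Fin n, i ≠ j ∧ c = lam i * lam j} m)
    (hM : IsGreatest {c : ℝ | ∃ i j : Fin n, i ≠ j ∧ c = lam i * lam j} M) :
    ∀ c : ℝ, m ≤ c → c ≤ M →
      ∃ x y : V, LinearIndependent ℝ ![x, y] ∧
        sectCurv (canonCT (fun u v => φ u v)) x y = c := by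
  have hφb : ∀ p q, φ (b p) (b q) = if p = q then lam p else 0 := by
    intro p q
    rw [hA, hb, real_inner_smul_left, orthonormal_iff_ite.mp b.orthonormal]
    split_ifs with h
    · subst h; ring
    · ring
  intro c hmc hcM
  obtain ⟨i0, j0, hij0, hm'⟩ := hm.1
  obtain ⟨i1, j1, hij1, hM'⟩ := hM.1
  by_cases h : i0 = j1
  · subst h
    exact aux_between b φ lam hφb i0 j0 i1 hij0.symm hij1 c
      (hm' ▸ hmc) (by rw [mul_comm]; exact hM' ▸ hcM)
  · by_cases hcv : c ≤ lam i0 * lam j1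
    · exact aux_between b φ lam hφb i0 j0 j1 hij0.symm (Ne.symm h) c (hm' ▸ hmc) hcv
    · refine aux_between b φ lam hφb j1 i0 i1 h hij1 c ?_ ?_
      · rw [mul_comm]; linarith [not_le.mp hcv]
      · rw [mul_comm]; exact hM' ▸ hcM
end

section
/- Let V = ℝ³ with the standard inner product, and define symmetric bilinear forms φ₁ and φ₂ on V by φ₁(x,y) = x₁y₁ + x₂y₂ and φ₂(x,y) = x₁y₁ + x₃y₃. Then every sectional curvature of R = R_{φ₁} + R_{φ₂} is strictly less than 2: for all linearly independent x, y ∈ V, κ_R(x,y) < 2. -/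
lemma gram_pos (x y : EuclideanSpace ℝ (Fin 3)) (h : LinearIndependent ℝ ![x, y]) :
    (0:ℝ) < (inner ℝ x x : ℝ) * (inner ℝ y y : ℝ) - (inner ℝ x y : ℝ) ^ 2 := by
  rw [linearIndependent_fin2] at h
  obtain ⟨hy, hx⟩ := h
  simp only [Matrix.cons_val_one, Matrix.head_cons, Matrix.cons_val_zero] at hy hx
  have hny : ‖y‖ ≠ 0 := norm_ne_zero_iff.mpr hy
  have key : ∀ c : ℝ, ‖y‖ • x ≠ c • y := by
    intro c hc
    apply hx (c / ‖y‖)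
    have : ‖y‖ • ((c / ‖y‖) • y) = ‖y‖ • x := by
      rw [smul_smul, mul_div_cancel₀ _ hny, hc]
    exact smul_right_injective _ hny this
  have h1 : (inner ℝ x y : ℝ) < ‖x‖ * ‖y‖ :=
    (inner_lt_norm_mul_iff_real).2 (key ‖x‖)
  have h2 : -(inner ℝ x y : ℝ) < ‖x‖ * ‖y‖ := by
    have := (inner_lt_norm_mul_iff_real (x := -x) (y := y)).2 ?_
    · simpa using this
    · intro hc
      exact key (-‖-x‖) (by rw [neg_smul, ← hc, smul_neg, neg_neg])
  have hsq : (inner ℝ x y : ℝ) ^ 2 < (‖x‖ * ‖y‖) ^ 2 := sq_lt_sq' (by linarith) h1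
  rw [real_inner_self_eq_norm_sq, real_inner_self_eq_norm_sq]
  nlinarith [norm_nonneg x, norm_nonneg y]

/-- For `φ₁(x,y) = x₁y₁ + x₂y₂` and `φ₂(x,y) = x₁y₁ + x₃y₃` on `ℝ³`, every sectional
curvature of `R_{φ₁} + R_{φ₂}` is strictly less than `2`. -/
theorem sectional_curvature_sum_lt_two :
    ∀ x y : EuclideanSpace ℝ (Fin 3), LinearIndependent ℝ ![x, y] →
      sectCurv (fun a b c d =>
        canonCT (fun u v : EuclideanSpace ℝ (Fin 3) => u 0 * v 0 + u 1 * v 1) a b c d +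
        canonCT (fun u v : EuclideanSpace ℝ (Fin 3) => u 0 * v 0 + u 2 * v 2) a b c d)
        x y < 2 := by
  intro x y h
  have hD := gram_pos x y h
  have hinner : ∀ u v : EuclideanSpace ℝ (Fin 3),
      (inner ℝ u v : ℝ) = u 0 * v 0 + u 1 * v 1 + u 2 * v 2 := by
    intro u v
    simp [PiLp.inner_apply, Fin.sum_univ_three, RCLike.inner_apply, mul_comm]
  rw [hinner, hinner, hinner] at hD
  simp only [sectCurv, canonCT, hinner]
  rw [div_lt_iff₀ hD]
  nlinarith [sq_nonneg (x 1 * y 2 - x 2 * y 1), hD]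
end

section
/- Let V be a real inner product space of finite dimension n ≥ 3 and let φ be a symmetric bilinear form on V with associated self-adjoint operator A. If every sectional curvature of R_φ is nonpositive, i.e., κ_{R_φ}(x,y) ≤ 0 for all linearly independent x, y ∈ V, then 0 is an eigenvalue of A: there exists a nonzero vector v ∈ V with A v = 0. -/
/-- If all sectional curvatures of `R_φ` are nonpositive on a space of dimension at
least 3, then `0` is an eigenvalue of the associated self-adjoint operator. -/
theorem zero_eigenvalue_of_nonpos_sectional_curvature
    {V : Type*} [NormedAddCommGroup V] [InnerProductSpace ℝ V] [FiniteDimensional ℝ V]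
    {n : ℕ} (hn : 3 ≤ n) (hdim : Module.finrank ℝ V = n)
    (φ : V →ₗ[ℝ] V →ₗ[ℝ] ℝ) (hφsymm : ∀ x y : V, φ x y = φ y x)
    (A : V →ₗ[ℝ] V) (hA : ∀ x y : V, φ x y = (inner ℝ (A x) y : ℝ))
    (hnonpos : ∀ x y : V, LinearIndependent ℝ ![x, y] →
      sectCurv (canonCT (fun u v => φ u v)) x y ≤ 0) :
    ∃ v : V, v ≠ 0 ∧ A v = 0 := by
  have hT : A.IsSymmetric := by
    intro x y
    rw [← hA, hφsymm, hA, real_inner_comm]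
  set b := hT.eigenvectorBasis hdim with hb
  set μ := hT.eigenvalues hdim with hμ
  have hinner : ∀ i j, (inner ℝ (b i) (b j) : ℝ) = if i = j then 1 else 0 :=
    fun i j => orthonormal_iff_ite.mp b.orthonormal i j
  have hφb : ∀ i j, φ (b i) (b j) = μ i * (if i = j then 1 else 0) := by
    intro i j
    rw [hA, hT.apply_eigenvectorBasis hdim i, real_inner_smul_left, hinner]
    norm_num [hμ]
  have key : ∀ i j : Fin n, i ≠ j → μ i * μ j ≤ 0 := by
    intro i j hij
    have hli : LinearIndependent ℝ ![b i, b j] := by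
      have hinj : Function.Injective ![i, j] := by
        intro a c hac
        fin_cases a <;> fin_cases c <;> simp_all
      have heq : ![b i, b j] = b ∘ ![i, j] := by
        funext k; fin_cases k <;> simp
      rw [heq]
      exact (b.orthonormal.comp _ hinj).linearIndependent
    have h := hnonpos (b i) (b j) hli
    rw [sectCurv, canonCT] at h
    simp only [hφb, hinner, if_neg hij, if_pos rfl, if_neg (Ne.symm hij)] at h
    simpa using h
  -- three distinct indices
  have i0 : Fin n := ⟨0, by omega⟩
  have hzero : ∃ k : Fin n, μ k = 0 := by
    set a := μ ⟨0, by omega⟩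
    set c := μ ⟨1, by omega⟩
    set d := μ ⟨2, by omega⟩
    have h01 : a * c ≤ 0 := key _ _ (by simp [Fin.ext_iff])
    have h02 : a * d ≤ 0 := key _ _ (by simp [Fin.ext_iff])
    have h12 : c * d ≤ 0 := key _ _ (by simp [Fin.ext_iff])
    have hp : (0:ℝ) ≤ (-(a*c)) * (-(a*d)) * (-(c*d)) :=
      mul_nonneg (mul_nonneg (neg_nonneg.2 h01) (neg_nonneg.2 h02)) (neg_nonneg.2 h12)
    have hsq : (a*c*d)^2 ≤ 0 := by nlinarith [hp]
    have habc : a * c * d = 0 := by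
      have := sq_nonneg (a*c*d)
      have h0 : (a*c*d)^2 = 0 := le_antisymm hsq this
      exact pow_eq_zero_iff (by norm_num) |>.mp h0
    rcases mul_eq_zero.mp habc with h | h
    · rcases mul_eq_zero.mp h with h | h
      · exact ⟨_, h⟩
      · exact ⟨_, h⟩
    · exact ⟨_, h⟩
  obtain ⟨k, hk⟩ := hzero
  refine ⟨b k, ?_, ?_⟩
  · simpa using b.toBasis.ne_zero k
  · have hk' : hT.eigenvalues hdim k = 0 := hk
    rw [hT.apply_eigenvectorBasis hdim k, hk']
    simp
end
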